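/- Let ν_0, ν_1 : ℕ → ℝ be the (unique) sequences satisfying ν_i(0) = ν_i(1) = 0 and, for all n ≥ 2 and i ∈ {0,1}, ν_i(n) = E[ν_0(I_n^i)] + E[ν_1(n − I_n^i)] + n, where I_n^i is binomial B(n, p_{i0}) distributed. Then ν_i(n) = (1/H) · n log n + O(n) as n → ∞, for both i ∈ {0,1}. (These ν_i(n) are the expected numbers of bucket operations E[B_n^i] of radix sort under the Markov source model with initial distribution ρ_i.) -/

import Mathlib

open Filter Asymptotics Real

/-- Expectation of `a` under the binomial distribution `B(n, p)`. -/
noncomputable def binomExp (p : ℝ) (n : ℕ) (a : ℕ → ℝ) : ℝ :=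
  ∑ k ∈ Finset.range (n + 1), (n.choose k : ℝ) * p ^ k * (1 - p) ^ (n - k) * a k

set_option maxHeartbeats 1000000



lemma binom_congr (p : ℝ) (n : ℕ) (a b : ℕ → ℝ) (h : ∀ k, a k = b k) :
    binomExp p n a = binomExp p n b := by
  unfold binomExp; exact Finset.sum_congr rfl (fun k _ => by rw [h k])

lemma binom_one (p : ℝ) (n : ℕ) : binomExp p n (fun _ => 1) = 1 := by
  calc binomExp p n (fun _ => 1)
      = (p + (1-p))^n := by
        rw [add_pow]
        exact Finset.sum_congr rfl (fun k _ => by push_cast; ring)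
    _ = 1 := by norm_num

lemma binom_add (p : ℝ) (n : ℕ) (a b : ℕ → ℝ) :
    binomExp p n (fun k => a k + b k) = binomExp p n a + binomExp p n b := by
  unfold binomExp
  rw [← Finset.sum_add_distrib]
  exact Finset.sum_congr rfl (fun k _ => by ring)

lemma binom_smul (p : ℝ) (n : ℕ) (c : ℝ) (a : ℕ → ℝ) :
    binomExp p n (fun k => c * a k) = c * binomExp p n a := by
  unfold binomExp
  rw [Finset.mul_sum]
  exact Finset.sum_congr rfl (fun k _ => by ring)

lemma binom_mono (p : ℝ) (hp0 : 0 ≤ p) (hp1 : p ≤ 1) (n : ℕ) (a b : ℕ → ℝ)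
    (h : ∀ k ≤ n, a k ≤ b k) : binomExp p n a ≤ binomExp p n b := by
  apply Finset.sum_le_sum
  intro k hk
  have hk' : k ≤ n := Nat.lt_succ_iff.mp (Finset.mem_range.mp hk)
  have h1p : (0:ℝ) ≤ 1 - p := by linarith
  have hw : (0:ℝ) ≤ (n.choose k : ℝ) * p ^ k * (1 - p) ^ (n - k) :=
    mul_nonneg (mul_nonneg (by positivity) (by positivity)) (pow_nonneg h1p _)
  exact mul_le_mul_of_nonneg_left (h k hk') hw

lemma choose_shift (m k : ℕ) : ((k:ℝ)+1) * ((m+1).choose (k+1)) = ((m:ℝ)+1) * (m.choose k) := by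
  have h2 : ((Nat.succ m * m.choose k : ℕ) : ℝ) = (((m+1).choose (k+1) * (k+1) : ℕ) : ℝ) :=
    congrArg Nat.cast (Nat.add_one_mul_choose_eq m k)
  push_cast at h2
  linarith

lemma binom_mean (p : ℝ) (n : ℕ) : binomExp p n (fun k => (k : ℝ)) = n * p := by
  cases n with
  | zero => simp [binomExp]
  | succ m =>
    unfold binomExp
    rw [Finset.sum_range_succ']
    simp only [Nat.cast_zero, mul_zero, add_zero]
    have key : ∀ k ∈ Finset.range (m + 1),
        ((m+1).choose (k+1) : ℝ) * p ^ (k+1) * (1 - p) ^ (m + 1 - (k+1)) * ((k+1 : ℕ) : ℝ)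
        = ((m+1) * p) * ((m.choose k : ℝ) * p ^ k * (1 - p) ^ (m - k) * (fun _ => (1:ℝ)) k) := by
      intro k hk
      have h1 := choose_shift m k
      have h2 : m + 1 - (k + 1) = m - k := by omega
      rw [h2]
      push_cast
      linear_combination (p ^ k * p * (1 - p) ^ (m - k)) * h1
    rw [Finset.sum_congr rfl key, ← Finset.mul_sum]
    have h1 := binom_one p m
    unfold binomExp at h1
    rw [h1]
    push_cast; ring

lemma binom_sqmom (p : ℝ) (n : ℕ) :
    binomExp p n (fun k => (k:ℝ) * ((k:ℝ) - 1)) = n * ((n:ℝ) - 1) * p^2 := by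
  cases n with
  | zero => simp [binomExp]
  | succ m =>
    unfold binomExp
    rw [Finset.sum_range_succ']
    simp only [Nat.cast_zero, zero_mul, mul_zero, add_zero]
    have key : ∀ k ∈ Finset.range (m + 1),
        ((m+1).choose (k+1) : ℝ) * p ^ (k+1) * (1 - p) ^ (m + 1 - (k+1)) *
          (((k+1 : ℕ) : ℝ) * (((k+1 : ℕ) : ℝ) - 1))
        = ((m+1) * p) * ((m.choose k : ℝ) * p ^ k * (1 - p) ^ (m - k) * (fun j : ℕ => (j:ℝ)) k) := by
      intro k hk
      have h1 := choose_shift m k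
      have h2 : m + 1 - (k + 1) = m - k := by omega
      rw [h2]
      push_cast
      linear_combination (p ^ k * p * (1 - p) ^ (m - k) * (k:ℝ)) * h1
    rw [Finset.sum_congr rfl key, ← Finset.mul_sum]
    have h1 := binom_mean p m
    unfold binomExp at h1
    rw [h1]
    push_cast; ring

lemma binom_var (p : ℝ) (n : ℕ) :
    binomExp p n (fun k => ((k:ℝ) - n * p)^2) = n * p * (1 - p) := by
  have e : (fun k : ℕ => ((k:ℝ) - n * p)^2)
      = fun k : ℕ => (k:ℝ) * ((k:ℝ) - 1) + ((1 - 2 * (n:ℝ) * p) * (k:ℝ) + ((n:ℝ)*p)^2 * 1) :=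
    funext (fun k => by ring)
  rw [e, binom_add, binom_sqmom, binom_add, binom_smul, binom_smul, binom_mean, binom_one]
  ring

lemma binom_reflect (p : ℝ) (n : ℕ) (a : ℕ → ℝ) :
    binomExp p n (fun k => a (n - k)) = binomExp (1 - p) n a := by
  unfold binomExp
  rw [← Finset.sum_range_reflect]
  apply Finset.sum_congr rfl
  intro k hk
  have hk' : k ≤ n := Nat.lt_succ_iff.mp (Finset.mem_range.mp hk)
  have h1 : n + 1 - 1 - k = n - k := by omega
  have h2 : n - (n - k) = k := by omega
  have h3 : n.choose (n - k) = n.choose k := Nat.choose_symm hk'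
  simp only [h1, h2, h3, sub_sub_cancel]
  ring


lemma xlogx_ge (x m : ℝ) (hx : 0 ≤ x) (hm : 0 < m) :
    x * Real.log m + (x - m) ≤ x * Real.log x := by
  rcases eq_or_lt_of_le hx with h | hxpos
  · simp [← h]; linarith
  · have h1 : Real.log (m / x) ≤ m / x - 1 := Real.log_le_sub_one_of_pos (by positivity)
    have h2 : Real.log (m / x) = Real.log m - Real.log x := Real.log_div (ne_of_gt hm) (ne_of_gt hxpos)
    have h3 : x * (Real.log m - Real.log x) ≤ x * (m / x - 1) :=
      mul_le_mul_of_nonneg_left (h2 ▸ h1) hx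
    have h4 : x * (m / x - 1) = m - x := by field_simp
    nlinarith

lemma xlogx_le (x m : ℝ) (hx : 0 ≤ x) (hm : 0 < m) :
    x * Real.log x ≤ x * Real.log m + (x - m) + (x - m)^2 / m := by
  rcases eq_or_lt_of_le hx with h | hxpos
  · simp [← h]
    rw [le_div_iff₀ hm]
    nlinarith
  · have h1 : Real.log (x / m) ≤ x / m - 1 := Real.log_le_sub_one_of_pos (by positivity)
    have h2 : Real.log (x / m) = Real.log x - Real.log m := Real.log_div (ne_of_gt hxpos) (ne_of_gt hm)
    have h3 : x * (Real.log x - Real.log m) ≤ x * (x / m - 1) :=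
      mul_le_mul_of_nonneg_left (h2 ▸ h1) hx
    have h4 : x * (x / m - 1) ≤ (x - m) + (x - m)^2 / m := by
      have heq : (x - m) + (x-m)^2/m - x * (x/m - 1) = 0 := by field_simp; ring
      linarith
    nlinarith

lemma sqrt_lb (x m : ℝ) (hx : 0 ≤ x) (hm : 0 < m) :
    Real.sqrt m + (x - m) / (2 * Real.sqrt m) - (x - m)^2 / (m * Real.sqrt m) ≤ Real.sqrt x := by
  set u := Real.sqrt x with hu
  set v := Real.sqrt m with hv
  have hu0 : 0 ≤ u := Real.sqrt_nonneg x
  have hv0 : 0 < v := Real.sqrt_pos.mpr hm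
  have hux : u^2 = x := Real.sq_sqrt hx
  have hvm : v^2 = m := Real.sq_sqrt (le_of_lt hm)
  rw [← hux, ← hvm]
  rw [show v + (u ^ 2 - v ^ 2) / (2 * v) - (u ^ 2 - v ^ 2) ^ 2 / (v ^ 2 * v)
      = (2*v^2*(v*v^2) + v^2*(u^2-v^2)*v - 2*(u^2-v^2)^2*v) / (2*v*(v^2*v)) by field_simp,
    div_le_iff₀ (by positivity)]
  nlinarith [sq_nonneg (u - v), sq_nonneg (u + v), mul_pos hv0 hv0, sq_nonneg ((u-v)*(u+v)), mul_nonneg (mul_nonneg hu0 hv0.le) (sq_nonneg (u-v))]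

lemma binom_const (p : ℝ) (n : ℕ) (c : ℝ) : binomExp p n (fun _ => c) = c := by
  rw [binom_congr p n _ (fun k => c * (fun _ : ℕ => (1:ℝ)) k) (fun k => by simp),
    binom_smul, binom_one, mul_one]

lemma binom_quad (q : ℝ) (n : ℕ) (c0 c1 c2 : ℝ) :
    binomExp q n (fun k => c0 + c1 * (k:ℝ) + c2 * ((k:ℝ) - n*q)^2)
      = c0 + c1*(n*q) + c2*(n*q*(1-q)) := by
  rw [binom_add, binom_add, binom_const,
    binom_smul q n c1 (fun k => (k:ℝ)), binom_smul q n c2 (fun k => ((k:ℝ) - n*q)^2),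
    binom_mean, binom_var]

lemma Exlogx_ge (q : ℝ) (n : ℕ) (hq0 : 0 < q) (hq1 : q < 1) (hn : 1 ≤ n) :
    (n*q) * Real.log (n*q) ≤ binomExp q n (fun k => (k:ℝ) * Real.log k) := by
  have hnpos : (0:ℝ) < n := by exact_mod_cast hn
  have hm : 0 < (n:ℝ)*q := by positivity
  calc (n*q) * Real.log (n*q)
      = binomExp q n (fun k => (-((n:ℝ)*q)) + (Real.log ((n:ℝ)*q) + 1) * (k:ℝ)
          + 0 * ((k:ℝ) - n*q)^2) := by rw [binom_quad]; ring
    _ ≤ binomExp q n (fun k => (k:ℝ) * Real.log k) := by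
        apply binom_mono q hq0.le hq1.le
        intro k hk
        have h := xlogx_ge (k:ℝ) ((n:ℝ)*q) (Nat.cast_nonneg k) hm
        nlinarith [h]

lemma Exlogx_le (q : ℝ) (n : ℕ) (hq0 : 0 < q) (hq1 : q < 1) (hn : 1 ≤ n) :
    binomExp q n (fun k => (k:ℝ) * Real.log k) ≤ (n*q) * Real.log (n*q) + (1 - q) := by
  have hnpos : (0:ℝ) < n := by exact_mod_cast hn
  have hm : 0 < (n:ℝ)*q := by positivity
  calc binomExp q n (fun k => (k:ℝ) * Real.log k)
      ≤ binomExp q n (fun k => (-((n:ℝ)*q)) + (Real.log ((n:ℝ)*q) + 1) * (k:ℝ)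
          + (1/((n:ℝ)*q)) * ((k:ℝ) - n*q)^2) := by
        apply binom_mono q hq0.le hq1.le
        intro k hk
        have h := xlogx_le (k:ℝ) ((n:ℝ)*q) (Nat.cast_nonneg k) hm
        have he : ((k:ℝ) - n*q)^2 / ((n:ℝ)*q) = (1/((n:ℝ)*q)) * ((k:ℝ) - n*q)^2 := by ring
        rw [he] at h
        nlinarith [h]
    _ = (n*q) * Real.log (n*q) + (1 - q) := by
        rw [binom_quad]
        field_simp
        ring

lemma Esqrt_ge (q : ℝ) (n : ℕ) (hq0 : 0 < q) (hq1 : q < 1) (hn : 1 ≤ n) :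
    Real.sqrt q * Real.sqrt n - ((1-q)/Real.sqrt q) / Real.sqrt n
      ≤ binomExp q n (fun k => Real.sqrt ((k:ℝ)+1)) := by
  have hnpos : (0:ℝ) < n := by exact_mod_cast hn
  have hm : 0 < (n:ℝ)*q + 1 := by positivity
  set m : ℝ := (n:ℝ)*q + 1 with hmdef
  have hsm : 0 < Real.sqrt m := Real.sqrt_pos.mpr hm
  have step1 : Real.sqrt m - ((n:ℝ)*q*(1-q)) / (m * Real.sqrt m)
      ≤ binomExp q n (fun k => Real.sqrt ((k:ℝ)+1)) := by
    calc Real.sqrt m - ((n:ℝ)*q*(1-q)) / (m * Real.sqrt m)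
        = binomExp q n (fun k =>
            (Real.sqrt m - ((n:ℝ)*q)/(2*Real.sqrt m))
            + (1/(2*Real.sqrt m)) * (k:ℝ)
            + (-(1/(m * Real.sqrt m))) * ((k:ℝ) - (n:ℝ)*q)^2) := by
          rw [binom_quad]
          field_simp
          ring
      _ ≤ binomExp q n (fun k => Real.sqrt ((k:ℝ)+1)) := by
          apply binom_mono q hq0.le hq1.le
          intro k hk
          have h := sqrt_lb ((k:ℝ)+1) m (by positivity) hm
          have he : Real.sqrt m + (((k:ℝ)+1) - m) / (2 * Real.sqrt m)
              - (((k:ℝ)+1) - m)^2 / (m * Real.sqrt m)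
              = (Real.sqrt m - ((n:ℝ)*q)/(2*Real.sqrt m))
                + (1/(2*Real.sqrt m)) * (k:ℝ)
                + (-(1/(m * Real.sqrt m))) * ((k:ℝ) - (n:ℝ)*q)^2 := by
            rw [hmdef]; ring
          rw [he] at h
          exact h
  have hnq : 0 < (n:ℝ)*q := by positivity
  have hsnq : Real.sqrt ((n:ℝ)*q) = Real.sqrt n * Real.sqrt q := Real.sqrt_mul hnpos.le q
  have ha : Real.sqrt q * Real.sqrt n ≤ Real.sqrt m := by
    calc Real.sqrt q * Real.sqrt n = Real.sqrt ((n:ℝ)*q) := by rw [hsnq]; ring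
      _ ≤ Real.sqrt m := Real.sqrt_le_sqrt (by rw [hmdef]; linarith)
  have hsnq0 : 0 < Real.sqrt ((n:ℝ)*q) := Real.sqrt_pos.mpr hnq
  have hb : ((n:ℝ)*q*(1-q)) / (m * Real.sqrt m) ≤ ((1-q)/Real.sqrt q) / Real.sqrt n := by
    have hden : ((n:ℝ)*q) * Real.sqrt ((n:ℝ)*q) ≤ m * Real.sqrt m := by
      have hs : Real.sqrt ((n:ℝ)*q) ≤ Real.sqrt m := Real.sqrt_le_sqrt (by rw [hmdef]; linarith)
      exact mul_le_mul (by rw [hmdef]; linarith) hs (Real.sqrt_nonneg _) hm.le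
    have h1 : ((n:ℝ)*q*(1-q)) / (m * Real.sqrt m)
        ≤ ((n:ℝ)*q*(1-q)) / (((n:ℝ)*q) * Real.sqrt ((n:ℝ)*q)) :=
      div_le_div_of_nonneg_left (by nlinarith) (by positivity) hden
    have h2 : ((n:ℝ)*q*(1-q)) / (((n:ℝ)*q) * Real.sqrt ((n:ℝ)*q))
        = ((1-q)/Real.sqrt q) / Real.sqrt n := by
      rw [hsnq]
      have hq' : Real.sqrt q ≠ 0 := by positivity
      have hn' : Real.sqrt n ≠ 0 := by positivity
      field_simp
    linarith
  calc Real.sqrt q * Real.sqrt n - ((1-q)/Real.sqrt q) / Real.sqrt n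
      ≤ Real.sqrt m - ((n:ℝ)*q*(1-q)) / (m * Real.sqrt m) := by linarith
    _ ≤ _ := step1


lemma binom_sub (p : ℝ) (n : ℕ) (a b : ℕ → ℝ) :
    binomExp p n (fun k => a k - b k) = binomExp p n a - binomExp p n b := by
  have h := binom_add p n a (fun k => (-1) * b k)
  rw [binom_smul] at h
  calc binomExp p n (fun k => a k - b k)
      = binomExp p n (fun k => a k + (-1) * b k) := binom_congr _ _ _ _ (fun k => by ring)
    _ = binomExp p n a - binomExp p n b := by rw [h]; ring

lemma binom_top (p : ℝ) (hp0 : 0 ≤ p) (hp1 : p ≤ 1) (n : ℕ) (f : ℕ → ℝ)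
    (h : ∀ k < n, f k ≤ 0) : binomExp p n f ≤ p^n * f n := by
  unfold binomExp
  rw [Finset.sum_range_succ]
  have htop : (n.choose n : ℝ) * p ^ n * (1 - p) ^ (n - n) * f n = p^n * f n := by
    rw [Nat.choose_self, Nat.sub_self]
    push_cast; ring
  rw [htop]
  have hrest : ∑ k ∈ Finset.range n, (n.choose k : ℝ) * p ^ k * (1 - p) ^ (n - k) * f k ≤ 0 := by
    apply Finset.sum_nonpos
    intro k hk
    have hk' : k < n := Finset.mem_range.mp hk
    have h1p : (0:ℝ) ≤ 1 - p := by linarith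
    have hw : (0:ℝ) ≤ (n.choose k : ℝ) * p ^ k * (1 - p) ^ (n - k) :=
      mul_nonneg (mul_nonneg (by positivity) (by positivity)) (pow_nonneg h1p _)
    exact mul_nonpos_of_nonneg_of_nonpos hw (h k hk')
  linarith

lemma delta_le (x y q0 r0 q1 r1 : ℝ) (hq0 : 0 ≤ q0) (hr0 : 0 ≤ r0) (hq1 : 0 ≤ q1)
    (hr1 : 0 ≤ r1) (h0 : q0 + r0 < 1) (h1 : q1 + r1 < 1)
    (s0 : x ≤ q0*x + r0*y) (s1 : y ≤ q1*x + r1*y) : x ≤ 0 ∧ y ≤ 0 := by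
  rcases le_total x y with hxy | hxy
  · have hy0 : y ≤ 0 := by nlinarith [mul_le_mul_of_nonneg_left hxy hq1]
    have hx0 : x ≤ 0 := by nlinarith [mul_nonpos_of_nonneg_of_nonpos hr0 hy0]
    exact ⟨hx0, hy0⟩
  · have hx0 : x ≤ 0 := by nlinarith [mul_le_mul_of_nonneg_left hxy hr0]
    have hy0 : y ≤ 0 := by nlinarith [mul_nonpos_of_nonneg_of_nonpos hq1 hx0]
    exact ⟨hx0, hy0⟩

theorem stmt5 (p : Fin 2 → Fin 2 → ℝ)
    (hp : ∀ i j, p i j ∈ Set.Ioo (0 : ℝ) 1)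
    (hsum : ∀ i, p i 0 + p i 1 = 1)
    (hne : ∃ i j, p i j ≠ 1 / 2)
    (pi' H' : Fin 2 → ℝ) (H : ℝ)
    (hpi0 : pi' 0 = p 1 0 / (p 0 1 + p 1 0))
    (hpi1 : pi' 1 = p 0 1 / (p 0 1 + p 1 0))
    (hH' : ∀ i, H' i = -(p i 0 * Real.log (p i 0)) - p i 1 * Real.log (p i 1))
    (hH : H = pi' 0 * H' 0 + pi' 1 * H' 1) (hHpos : 0 < H)
    (ν : Fin 2 → ℕ → ℝ)
    (hinit : ∀ i : Fin 2, ν i 0 = 0 ∧ ν i 1 = 0)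
    (hrec : ∀ i : Fin 2, ∀ n : ℕ, 2 ≤ n →
      ν i n = binomExp (p i 0) n (ν 0) + binomExp (p i 0) n (fun k => ν 1 (n - k)) + n) :
    ∀ i : Fin 2,
      (fun n : ℕ => ν i n - 1 / H * ((n : ℝ) * Real.log n))
        =O[atTop] (fun n : ℕ => (n : ℝ)) := by
  -- basic positivity facts
  have hfin : ∀ (f : Fin 2 → ℝ), 0 ≤ f 0 → 0 ≤ f 1 → ∀ i : Fin 2, f i ≤ f 0 + f 1 := by
    intro f h0 h1 i
    fin_cases i
    · simpa using by linarith
    · simpa using by linarith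
  have hq0 : ∀ i, 0 < p i 0 := fun i => (hp i 0).1
  have hq1 : ∀ i, p i 0 < 1 := fun i => (hp i 0).2
  have hr0 : ∀ i, 0 < p i 1 := fun i => (hp i 1).1
  have hr1 : ∀ i, p i 1 < 1 := fun i => (hp i 1).2
  have hr : ∀ i, p i 1 = 1 - p i 0 := fun i => by have := hsum i; linarith
  -- the linear correction coefficients
  set d : ℝ := (H - H' 0)/(H * p 0 1) with hd
  set a : Fin 2 → ℝ := ![d, 0] with ha
  have ha0 : a 0 = d := rfl
  have ha1 : a 1 = 0 := rfl
  have hH0 : H ≠ 0 := ne_of_gt hHpos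
  have hp01 : p 0 1 ≠ 0 := ne_of_gt (hr0 0)
  have hp10 : p 1 0 ≠ 0 := ne_of_gt (hq0 1)
  have hden : p 0 1 + p 1 0 ≠ 0 := by have := hr0 0; have := hq0 1; positivity
  have hHsum : H * (p 0 1 + p 1 0) = p 1 0 * H' 0 + p 0 1 * H' 1 := by
    rw [hH, hpi0, hpi1]; field_simp
  have hkey : ∀ i, (a 0 * p i 0 + a 1 * p i 1 + (1 - H' i / H)) = a i := by
    have h00 : p 0 0 = 1 - p 0 1 := by linarith [hsum 0]
    rw [Fin.forall_fin_two]
    constructor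
    · rw [ha0, ha1, hd, h00]
      field_simp
      ring
    · rw [ha0, ha1, hd]
      have goal_eq : (H - H' 0)/(H * p 0 1) * p 1 0 + 0 * p 1 1 + (1 - H' 1/H)
          = (H * (p 0 1 + p 1 0) - (p 1 0 * H' 0 + p 0 1 * H' 1))/(H * p 0 1) := by
        field_simp
        ring
      rw [goal_eq, hHsum, sub_self, zero_div]
  -- entropy identity
  have hent : ∀ i : Fin 2, ∀ n : ℕ, 1 ≤ n →
      ((n:ℝ) * p i 0) * Real.log ((n:ℝ) * p i 0) + ((n:ℝ) * p i 1) * Real.log ((n:ℝ) * p i 1)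
        = (n:ℝ) * Real.log n - H' i * n := by
    intro i n hn
    have hn' : (0:ℝ) < n := by exact_mod_cast hn
    rw [Real.log_mul (ne_of_gt hn') (ne_of_gt (hq0 i)),
      Real.log_mul (ne_of_gt hn') (ne_of_gt (hr0 i)), hH' i]
    have hs := hsum i
    linear_combination ((n:ℝ) * Real.log n) * hs
  -- constants
  set ε : ℝ := min (Real.sqrt (p 0 0) + Real.sqrt (p 0 1) - 1)
      (Real.sqrt (p 1 0) + Real.sqrt (p 1 1) - 1) with hεdef
  have hsq1 : ∀ i : Fin 2, 1 < Real.sqrt (p i 0) + Real.sqrt (p i 1) := by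
    intro i
    have l1 : p i 0 < Real.sqrt (p i 0) := by
      have h := Real.sqrt_lt_sqrt (by positivity) (show (p i 0)^2 < p i 0 by nlinarith [hq0 i, hq1 i])
      rwa [Real.sqrt_sq (hq0 i).le] at h
    have l2 : p i 1 < Real.sqrt (p i 1) := by
      have h := Real.sqrt_lt_sqrt (by positivity) (show (p i 1)^2 < p i 1 by nlinarith [hr0 i, hr1 i])
      rwa [Real.sqrt_sq (hr0 i).le] at h
    have := hsum i
    linarith
  have hε : 0 < ε := by
    rw [hεdef, lt_min_iff]
    constructor <;> [linarith [hsq1 0]; linarith [hsq1 1]]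
  have hεi : ∀ i, ε ≤ Real.sqrt (p i 0) + Real.sqrt (p i 1) - 1 := by
    rw [Fin.forall_fin_two]
    exact ⟨min_le_left _ _, min_le_right _ _⟩
  set C : ℝ := ((p 0 1)/Real.sqrt (p 0 0) + (p 0 0)/Real.sqrt (p 0 1))
      + ((p 1 1)/Real.sqrt (p 1 0) + (p 1 0)/Real.sqrt (p 1 1)) with hCdef
  have hCterm : ∀ i : Fin 2, 0 ≤ (p i 1)/Real.sqrt (p i 0) + (p i 0)/Real.sqrt (p i 1) := by
    intro i
    have := hq0 i; have := hr0 i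
    positivity
  have hC0 : 0 ≤ C := by
    rw [hCdef]; have := hCterm 0; have := hCterm 1; linarith
  have hCi : ∀ i, (p i 1)/Real.sqrt (p i 0) + (p i 0)/Real.sqrt (p i 1) ≤ C := by
    rw [hCdef, Fin.forall_fin_two]
    constructor <;> [linarith [hCterm 1]; linarith [hCterm 0]]
  set n0 : ℕ := ⌈((3+C)/ε)^2⌉₊ + 2 with hn0def
  have hn02 : 2 ≤ n0 := by omega
  have hn0 : ∀ n : ℕ, n0 ≤ n → 3 + C ≤ ε * Real.sqrt n := by
    intro n hn
    have hs : 0 ≤ (3+C)/ε := by positivity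
    have h1 : ((3+C)/ε)^2 ≤ (n:ℝ) := by
      calc ((3+C)/ε)^2 ≤ (⌈((3+C)/ε)^2⌉₊ : ℝ) := Nat.le_ceil _
        _ ≤ (n:ℝ) := by
            have : (⌈((3+C)/ε)^2⌉₊ : ℕ) ≤ n := by omega
            exact_mod_cast this
    have h2 : (3+C)/ε ≤ Real.sqrt n := by
      calc (3+C)/ε = Real.sqrt (((3+C)/ε)^2) := (Real.sqrt_sq hs).symm
        _ ≤ _ := Real.sqrt_le_sqrt h1
    calc 3 + C = ε * ((3+C)/ε) := by field_simp
      _ ≤ ε * Real.sqrt n := mul_le_mul_of_nonneg_left h2 hε.le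
  set B : ℝ := ∑ n ∈ Finset.range n0, (|ν 0 n| + |ν 1 n| + (|a 0| + |a 1|) * n) with hBdef
  have hBterm : ∀ m : ℕ, m ∈ Finset.range n0 → 0 ≤ |ν 0 m| + |ν 1 m| + (|a 0| + |a 1|) * (m:ℝ) := by
    intro m _
    have h0 : (0:ℝ) ≤ (|a 0| + |a 1|) * (m:ℝ) :=
      mul_nonneg (by positivity) (Nat.cast_nonneg m)
    positivity
  have hB0 : 0 ≤ B := by
    rw [hBdef]; exact Finset.sum_nonneg hBterm
  have hB : ∀ i : Fin 2, ∀ n : ℕ, n < n0 → |ν i n| + |a i| * (n:ℝ) ≤ B := by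
    intro i n hn
    have hmem : n ∈ Finset.range n0 := Finset.mem_range.mpr hn
    have hsingle := Finset.single_le_sum hBterm hmem
    rw [← hBdef] at hsingle
    have hnn : (0:ℝ) ≤ n := Nat.cast_nonneg n
    have h1 : |a i| * (n:ℝ) ≤ (|a 0| + |a 1|) * (n:ℝ) :=
      mul_le_mul_of_nonneg_right (hfin (fun j => |a j|) (abs_nonneg _) (abs_nonneg _) i) hnn
    have h2 : |ν i n| ≤ |ν 0 n| + |ν 1 n| :=
      hfin (fun j => |ν j n|) (abs_nonneg _) (abs_nonneg _) i
    linarith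
  set D : ℝ := 2/H + 2*(|a 0| + |a 1|) + B + 1 with hDdef
  have h2H : 0 < 2/H := by positivity
  have hD2H : 2/H ≤ D := by
    rw [hDdef]; nlinarith [abs_nonneg (a 0), abs_nonneg (a 1), hB0]
  have hDa : ∀ i : Fin 2, |a i| ≤ D := by
    intro i
    rw [hDdef]
    have := hfin (fun j => |a j|) (abs_nonneg _) (abs_nonneg _) i
    nlinarith [abs_nonneg (a 0), abs_nonneg (a 1), hB0, h2H]
  have hDB : B ≤ D := by
    rw [hDdef]; nlinarith [abs_nonneg (a 0), abs_nonneg (a 1), h2H]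
  have hD0 : 0 < D := by
    rw [hDdef]; nlinarith [abs_nonneg (a 0), abs_nonneg (a 1), hB0, h2H]
  have hDa2 : ∀ i : Fin 2, 2*|a i| ≤ D := by
    intro i
    rw [hDdef]
    have := hfin (fun j => |a j|) (abs_nonneg _) (abs_nonneg _) i
    nlinarith [abs_nonneg (a 0), abs_nonneg (a 1), hB0, h2H]
  clear_value a ε C B D
  -- the main claim
  have claim : ∀ n : ℕ, ∀ i : Fin 2,
      (1/H) * ((n:ℝ) * Real.log n) + a i * n - D * n ≤ ν i n ∧
      ν i n ≤ (1/H) * ((n:ℝ) * Real.log n) + a i * n + D * ((n:ℝ) + 1 - Real.sqrt ((n:ℝ)+1)) := by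
    have hiH : (0:ℝ) ≤ 1/H := by positivity
    intro n
    induction n using Nat.strong_induction_on with
    | _ n IH =>
      rcases Nat.lt_or_ge n 2 with hlt2 | h2
      · -- base cases n = 0, 1
        interval_cases n
        · intro i
          have h0 := (hinit i).1
          constructor
          · rw [h0]; norm_num
          · rw [h0]; norm_num
        · intro i
          have h1 := (hinit i).2
          have hai : a i ≤ D := le_trans (le_abs_self _) (hDa i)
          have hs2 : Real.sqrt 2 ≤ 3/2 := by
            have h := Real.sqrt_le_sqrt (show (2:ℝ) ≤ (3/2)^2 by norm_num)
            rwa [Real.sqrt_sq (by norm_num : (0:ℝ) ≤ 3/2)] at h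
          have hai2 : 2*|a i| ≤ D := hDa2 i
          constructor
          · rw [h1]; push_cast; rw [Real.log_one]; linarith
          · rw [h1]; push_cast; rw [Real.log_one]
            have h3 : D*(1/2) ≤ D * (1 + 1 - Real.sqrt 2) :=
              mul_le_mul_of_nonneg_left (by linarith) hD0.le
            have h4 : -|a i| ≤ a i := neg_abs_le _
            nlinarith
      · -- n ≥ 2
        have hn1 : 1 ≤ n := by omega
        have hnR1 : (1:ℝ) ≤ n := by exact_mod_cast hn1
        have hnpos : (0:ℝ) < n := by linarith
        have hlogn : 0 ≤ Real.log n := Real.log_nonneg hnR1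
        have hrec' : ∀ i, ν i n = binomExp (p i 0) n (ν 0) + binomExp (p i 1) n (ν 1) + n := by
          intro i
          rw [hrec i n h2]
          congr 2
          rw [binom_reflect, ← hr i]
        -- lower bound ideal inequality
        have lower_ideal : ∀ i, (1/H) * ((n:ℝ) * Real.log n) + a i * n - D * n
            ≤ binomExp (p i 0) n (fun k => (1/H) * ((k:ℝ) * Real.log k) + a 0 * k - D * k)
              + binomExp (p i 1) n (fun k => (1/H) * ((k:ℝ) * Real.log k) + a 1 * k - D * k) + n := by
          intro i
          have e0 : ∀ (q : ℝ) (j : Fin 2), binomExp q n (fun k => (1/H) * ((k:ℝ) * Real.log k) + a j * k - D * k)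
              = (1/H) * binomExp q n (fun k => (k:ℝ) * Real.log k) + (a j - D) * ((n:ℝ) * q) := by
            intro q j
            rw [binom_congr q n _ (fun k => (1/H) * ((fun k => (k:ℝ) * Real.log k) k)
              + (a j - D) * ((fun k => (k:ℝ)) k)) (fun k => by simp only; ring)]
            rw [binom_add, binom_smul, binom_smul, binom_mean]
          rw [e0 _ 0, e0 _ 1]
          have g0 : (1/H) * (((n:ℝ) * p i 0) * Real.log ((n:ℝ) * p i 0))
              ≤ (1/H) * binomExp (p i 0) n (fun k => (k:ℝ) * Real.log k) :=
            mul_le_mul_of_nonneg_left (Exlogx_ge (p i 0) n (hq0 i) (hq1 i) hn1) hiH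
          have g1 : (1/H) * (((n:ℝ) * p i 1) * Real.log ((n:ℝ) * p i 1))
              ≤ (1/H) * binomExp (p i 1) n (fun k => (k:ℝ) * Real.log k) :=
            mul_le_mul_of_nonneg_left (Exlogx_ge (p i 1) n (hr0 i) (hr1 i) hn1) hiH
          have heq : (1/H) * (((n:ℝ) * p i 0) * Real.log ((n:ℝ) * p i 0)) + (a 0 - D) * ((n:ℝ) * p i 0)
              + ((1/H) * (((n:ℝ) * p i 1) * Real.log ((n:ℝ) * p i 1)) + (a 1 - D) * ((n:ℝ) * p i 1)) + n
              = (1/H) * ((n:ℝ) * Real.log n) + a i * n - D * n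
                + (1/H) * ((((n:ℝ) * p i 0) * Real.log ((n:ℝ) * p i 0)
                    + ((n:ℝ) * p i 1) * Real.log ((n:ℝ) * p i 1)) - ((n:ℝ) * Real.log n - H' i * n)) := by
            linear_combination (n:ℝ) * hkey i - D*(n:ℝ) * hsum i
          have hent' := hent i n hn1
          have hent2 : (1/H) * ((((n:ℝ) * p i 0) * Real.log ((n:ℝ) * p i 0)
              + ((n:ℝ) * p i 1) * Real.log ((n:ℝ) * p i 1)) - ((n:ℝ) * Real.log n - H' i * n)) = 0 := by
            rw [hent', sub_self, mul_zero]
          linarith only [g0, g1, heq, hent2]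
        -- lower bound delta argument
        have hLle : ∀ j : Fin 2, ∀ k, k < n →
            (1/H) * ((k:ℝ) * Real.log k) + a j * k - D * k - ν j k ≤ 0 := by
          intro j k hk
          linarith only [(IH k hk j).1]
        have hstepL : ∀ i : Fin 2,
            ((1/H) * ((n:ℝ) * Real.log n) + a i * n - D * n) - ν i n
            ≤ (p i 0)^n * (((1/H) * ((n:ℝ) * Real.log n) + a 0 * n - D * n) - ν 0 n)
              + (p i 1)^n * (((1/H) * ((n:ℝ) * Real.log n) + a 1 * n - D * n) - ν 1 n) := by
          intro i
          have hb0 := binom_top (p i 0) (hq0 i).le (hq1 i).le n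
            (fun k => ((1/H) * ((k:ℝ) * Real.log k) + a 0 * k - D * k) - ν 0 k)
            (fun k hk => hLle 0 k hk)
          have hb1 := binom_top (p i 1) (hr0 i).le (hr1 i).le n
            (fun k => ((1/H) * ((k:ℝ) * Real.log k) + a 1 * k - D * k) - ν 1 k)
            (fun k hk => hLle 1 k hk)
          rw [binom_sub] at hb0 hb1
          have hli := lower_ideal i
          have hre := hrec' i
          linarith only [hb0, hb1, hli, hre]
        have hpow : ∀ i : Fin 2, (p i 0)^n + (p i 1)^n < 1 := by
          intro i
          have h1 : (p i 0)^n ≤ (p i 0)^2 := pow_le_pow_of_le_one (hq0 i).le (hq1 i).le h2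
          have h2' : (p i 1)^n ≤ (p i 1)^2 := pow_le_pow_of_le_one (hr0 i).le (hr1 i).le h2
          nlinarith only [h1, h2', hq0 i, hr0 i, hsum i]
        have hpw0 : ∀ i : Fin 2, (0:ℝ) ≤ (p i 0)^n := fun i => pow_nonneg (hq0 i).le n
        have hpw1 : ∀ i : Fin 2, (0:ℝ) ≤ (p i 1)^n := fun i => pow_nonneg (hr0 i).le n
        have hΔL : (((1/H) * ((n:ℝ) * Real.log n) + a 0 * n - D * n) - ν 0 n ≤ 0)
            ∧ (((1/H) * ((n:ℝ) * Real.log n) + a 1 * n - D * n) - ν 1 n ≤ 0) := by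
          apply delta_le _ _ _ _ _ _ (hpw0 0) (hpw1 0) (hpw0 1) (hpw1 1) (hpow 0) (hpow 1)
          · exact hstepL 0
          · exact hstepL 1
        -- now the upper bound
        have upper : ∀ i : Fin 2, ν i n ≤ (1/H) * ((n:ℝ) * Real.log n) + a i * n
            + D * ((n:ℝ) + 1 - Real.sqrt ((n:ℝ)+1)) := by
          have hnR2 : (2:ℝ) ≤ n := by exact_mod_cast h2
          have hsqn1 : Real.sqrt ((n:ℝ)+1) ≤ (n:ℝ) := by
            have h := Real.sqrt_le_sqrt (show (n:ℝ)+1 ≤ (n:ℝ)^2 by nlinarith only [hnR2])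
            rwa [Real.sqrt_sq hnpos.le] at h
          rcases Nat.lt_or_ge n n0 with hnn0 | hnn0
          · -- base case: 2 ≤ n < n0
            intro i
            have hBn := hB i n hnn0
            have h1 : 1 ≤ (n:ℝ)+1 - Real.sqrt ((n:ℝ)+1) := by linarith only [hsqn1, hnR2]
            have hmul : D*1 ≤ D*((n:ℝ)+1 - Real.sqrt ((n:ℝ)+1)) :=
              mul_le_mul_of_nonneg_left h1 hD0.le
            have h3 : ν i n ≤ |ν i n| := le_abs_self _
            have h4 : -(|a i| * (n:ℝ)) ≤ a i * n := by
              have h5 := mul_le_mul_of_nonneg_right (neg_abs_le (a i)) hnpos.le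
              have h6 : (-|a i|) * (n:ℝ) = -(|a i| * (n:ℝ)) := by ring
              linarith only [h5, h6.ge, h6.le]
            have h7 : 0 ≤ (1/H) * ((n:ℝ) * Real.log n) :=
              mul_nonneg hiH (mul_nonneg hnpos.le hlogn)
            linarith only [hBn, hDB, hmul, h3, h4, h7]
          · -- main case: n ≥ n0
            have hεn := hn0 n hnn0
            have hsqrtn1 : (1:ℝ) ≤ Real.sqrt n := by
              have h := Real.sqrt_le_sqrt hnR1
              rwa [Real.sqrt_one] at h
            have hsqnn : Real.sqrt ((n:ℝ)+1) ≤ Real.sqrt (n:ℝ) + 1 := by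
              have h := Real.sqrt_le_sqrt (show (n:ℝ)+1 ≤ (Real.sqrt (n:ℝ) + 1)^2 by
                nlinarith only [Real.sq_sqrt hnpos.le, Real.sqrt_nonneg (n:ℝ), hsqrtn1])
              rwa [Real.sqrt_sq (by positivity)] at h
            -- the ideal upper inequality
            have upper_ideal : ∀ i : Fin 2,
                binomExp (p i 0) n (fun k => (1/H) * ((k:ℝ) * Real.log k) + a 0 * k
                    + D * ((k:ℝ) + 1 - Real.sqrt ((k:ℝ)+1)))
                  + binomExp (p i 1) n (fun k => (1/H) * ((k:ℝ) * Real.log k) + a 1 * k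
                    + D * ((k:ℝ) + 1 - Real.sqrt ((k:ℝ)+1))) + n
                ≤ (1/H) * ((n:ℝ) * Real.log n) + a i * n
                  + D * ((n:ℝ) + 1 - Real.sqrt ((n:ℝ)+1)) := by
              intro i
              have hexp : ∀ (q : ℝ) (j : Fin 2),
                  binomExp q n (fun k => (1/H) * ((k:ℝ) * Real.log k) + a j * k
                    + D * ((k:ℝ) + 1 - Real.sqrt ((k:ℝ)+1)))
                  = (1/H) * binomExp q n (fun k => (k:ℝ) * Real.log k)
                    + (a j + D) * ((n:ℝ) * q) + D
                    + (-D) * binomExp q n (fun k => Real.sqrt ((k:ℝ)+1)) := by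
                intro q j
                rw [binom_congr q n _ (fun k => (1/H) * ((fun k => (k:ℝ) * Real.log k) k)
                  + ((a j + D) * ((fun k => (k:ℝ)) k)
                  + (D * ((fun _ : ℕ => (1:ℝ)) k) + (-D) * ((fun k => Real.sqrt ((k:ℝ)+1)) k))))
                  (fun k => by simp only; ring)]
                rw [binom_add, binom_add, binom_add, binom_smul, binom_smul, binom_smul,
                  binom_smul, binom_mean, binom_one]
                ring
              have bound : ∀ (q : ℝ), 0 < q → q < 1 →
                  (1/H) * binomExp q n (fun k => (k:ℝ) * Real.log k)
                    + (-D) * binomExp q n (fun k => Real.sqrt ((k:ℝ)+1))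
                  ≤ (1/H) * (((n:ℝ)*q) * Real.log ((n:ℝ)*q) + (1 - q))
                    + (-D) * (Real.sqrt q * Real.sqrt n - ((1-q)/Real.sqrt q) / Real.sqrt n) := by
                intro q hq0' hq1'
                have hX := mul_le_mul_of_nonneg_left (Exlogx_le q n hq0' hq1' hn1) hiH
                have hS := mul_le_mul_of_nonpos_left (Esqrt_ge q n hq0' hq1' hn1)
                  (by linarith only [hD0] : -D ≤ 0)
                linarith only [hX, hS]
              rw [hexp _ 0, hexp _ 1]
              have b0 := bound (p i 0) (hq0 i) (hq1 i)
              have b1 := bound (p i 1) (hr0 i) (hr1 i)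
              -- the exact rearrangement with slack
              have hent2 : (1/H) * ((((n:ℝ) * p i 0) * Real.log ((n:ℝ) * p i 0)
                  + ((n:ℝ) * p i 1) * Real.log ((n:ℝ) * p i 1)) - ((n:ℝ) * Real.log n - H' i * n)) = 0 := by
                rw [hent i n hn1, sub_self, mul_zero]
              have heqU : (1/H) * (((n:ℝ)*(p i 0)) * Real.log ((n:ℝ)*(p i 0)) + (1 - p i 0))
                    + (-D) * (Real.sqrt (p i 0) * Real.sqrt n
                        - ((1-(p i 0))/Real.sqrt (p i 0)) / Real.sqrt n)
                    + ((a 0 + D) * ((n:ℝ) * p i 0) + D)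
                  + ((1/H) * (((n:ℝ)*(p i 1)) * Real.log ((n:ℝ)*(p i 1)) + (1 - p i 1))
                    + (-D) * (Real.sqrt (p i 1) * Real.sqrt n
                        - ((1-(p i 1))/Real.sqrt (p i 1)) / Real.sqrt n)
                    + ((a 1 + D) * ((n:ℝ) * p i 1) + D)) + n
                  = (1/H) * ((n:ℝ) * Real.log n) + a i * n
                    + D * ((n:ℝ) + 1 - Real.sqrt ((n:ℝ)+1))
                    + (1/H + D
                      + D * ((((1 - p i 0)/Real.sqrt (p i 0))/Real.sqrt n)
                          + (((1 - p i 1)/Real.sqrt (p i 1))/Real.sqrt n))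
                      + D * Real.sqrt ((n:ℝ)+1)
                      - D * ((Real.sqrt (p i 0) + Real.sqrt (p i 1)) * Real.sqrt n))
                    + (1/H) * ((((n:ℝ) * p i 0) * Real.log ((n:ℝ) * p i 0)
                      + ((n:ℝ) * p i 1) * Real.log ((n:ℝ) * p i 1))
                      - ((n:ℝ) * Real.log n - H' i * n)) := by
                linear_combination (n:ℝ) * (hkey i) + (D*(n:ℝ) - 1/H) * (hsum i)
              have hSL0 : 1/H + D
                  + D * ((((1 - p i 0)/Real.sqrt (p i 0))/Real.sqrt n)
                      + (((1 - p i 1)/Real.sqrt (p i 1))/Real.sqrt n))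
                  + D * Real.sqrt ((n:ℝ)+1)
                  - D * ((Real.sqrt (p i 0) + Real.sqrt (p i 1)) * Real.sqrt n) ≤ 0 := by
                have e1 : 1 - p i 0 = p i 1 := by linarith only [hsum i]
                have e2 : 1 - p i 1 = p i 0 := by linarith only [hsum i]
                have hCnn : 0 ≤ (1 - p i 0)/Real.sqrt (p i 0) + (1 - p i 1)/Real.sqrt (p i 1) := by
                  rw [e1, e2]
                  have := hq0 i; have := hr0 i
                  positivity
                have hCC : (1 - p i 0)/Real.sqrt (p i 0) + (1 - p i 1)/Real.sqrt (p i 1) ≤ C := by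
                  rw [e1, e2]; exact hCi i
                have hdiv : (((1 - p i 0)/Real.sqrt (p i 0))/Real.sqrt n)
                    + (((1 - p i 1)/Real.sqrt (p i 1))/Real.sqrt n) ≤ C := by
                  have h1 : (((1 - p i 0)/Real.sqrt (p i 0))/Real.sqrt n)
                      + (((1 - p i 1)/Real.sqrt (p i 1))/Real.sqrt n)
                      = ((1 - p i 0)/Real.sqrt (p i 0) + (1 - p i 1)/Real.sqrt (p i 1))/Real.sqrt n := by
                    ring
                  rw [h1]
                  calc ((1 - p i 0)/Real.sqrt (p i 0) + (1 - p i 1)/Real.sqrt (p i 1))/Real.sqrt n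
                      ≤ ((1 - p i 0)/Real.sqrt (p i 0) + (1 - p i 1)/Real.sqrt (p i 1)) :=
                        div_le_self hCnn hsqrtn1
                    _ ≤ C := hCC
                have m2 : D * ((((1 - p i 0)/Real.sqrt (p i 0))/Real.sqrt n)
                    + (((1 - p i 1)/Real.sqrt (p i 1))/Real.sqrt n)) ≤ D * C :=
                  mul_le_mul_of_nonneg_left hdiv hD0.le
                have m1 : D * Real.sqrt ((n:ℝ)+1) ≤ D * (Real.sqrt (n:ℝ) + 1) :=
                  mul_le_mul_of_nonneg_left hsqnn hD0.le
                have hd : (1 + ε) * Real.sqrt n ≤ (Real.sqrt (p i 0) + Real.sqrt (p i 1)) * Real.sqrt n :=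
                  mul_le_mul_of_nonneg_right (by linarith only [hεi i]) (Real.sqrt_nonneg _)
                have m3 : D * ((1 + ε) * Real.sqrt n)
                    ≤ D * ((Real.sqrt (p i 0) + Real.sqrt (p i 1)) * Real.sqrt n) :=
                  mul_le_mul_of_nonneg_left hd hD0.le
                have m4 : D * (3 + C) ≤ D * (ε * Real.sqrt n) :=
                  mul_le_mul_of_nonneg_left hεn hD0.le
                have m5 : 1/H ≤ D := by
                  have hx : 2/H = 2*(1/H) := by ring
                  linarith only [hD2H, hiH, hx.le, hx.ge]
                have x1 : D * ((1 + ε) * Real.sqrt n) = D * Real.sqrt n + D * (ε * Real.sqrt n) := by ring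
                have x2 : D * (3 + C) = 3*D + D*C := by ring
                have x3 : D * (Real.sqrt (n:ℝ) + 1) = D * Real.sqrt (n:ℝ) + D := by ring
                linarith only [m1, m2, m3, m4, m5, x1.ge, x1.le, x2.ge, x2.le, x3.ge, x3.le, hD0]
              linarith only [b0, b1, heqU, hent2, hSL0]
            -- delta argument for the upper bound
            have hUge : ∀ j : Fin 2, ∀ k, k < n →
                ν j k - ((1/H) * ((k:ℝ) * Real.log k) + a j * k
                  + D * ((k:ℝ) + 1 - Real.sqrt ((k:ℝ)+1))) ≤ 0 := by
              intro j k hk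
              linarith only [(IH k hk j).2]
            have hstepU : ∀ i : Fin 2,
                ν i n - ((1/H) * ((n:ℝ) * Real.log n) + a i * n
                  + D * ((n:ℝ) + 1 - Real.sqrt ((n:ℝ)+1)))
                ≤ (p i 0)^n * (ν 0 n - ((1/H) * ((n:ℝ) * Real.log n) + a 0 * n
                    + D * ((n:ℝ) + 1 - Real.sqrt ((n:ℝ)+1))))
                  + (p i 1)^n * (ν 1 n - ((1/H) * ((n:ℝ) * Real.log n) + a 1 * n
                    + D * ((n:ℝ) + 1 - Real.sqrt ((n:ℝ)+1)))) := by
              intro i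
              have hb0 := binom_top (p i 0) (hq0 i).le (hq1 i).le n
                (fun k => ν 0 k - ((1/H) * ((k:ℝ) * Real.log k) + a 0 * k
                  + D * ((k:ℝ) + 1 - Real.sqrt ((k:ℝ)+1))))
                (fun k hk => hUge 0 k hk)
              have hb1 := binom_top (p i 1) (hr0 i).le (hr1 i).le n
                (fun k => ν 1 k - ((1/H) * ((k:ℝ) * Real.log k) + a 1 * k
                  + D * ((k:ℝ) + 1 - Real.sqrt ((k:ℝ)+1))))
                (fun k hk => hUge 1 k hk)
              rw [binom_sub] at hb0 hb1
              have hui := upper_ideal i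
              have hre := hrec' i
              linarith only [hb0, hb1, hui, hre]
            have hΔU := delta_le _ _ _ _ _ _ (hpw0 0) (hpw1 0) (hpw0 1) (hpw1 1)
              (hpow 0) (hpow 1) (hstepU 0) (hstepU 1)
            rw [Fin.forall_fin_two]
            exact ⟨by linarith only [hΔU.1], by linarith only [hΔU.2]⟩
        rw [Fin.forall_fin_two]
        exact ⟨⟨by linarith only [hΔL.1], upper 0⟩, ⟨by linarith only [hΔL.2], upper 1⟩⟩
  -- conclusion
  intro i
  rw [isBigO_iff]
  refine ⟨|a 0| + |a 1| + 2*D, ?_⟩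
  filter_upwards [eventually_ge_atTop 1] with n hn
  have hc := claim n i
  have hn1 : (1:ℝ) ≤ n := by exact_mod_cast hn
  have habs : |a i| ≤ |a 0| + |a 1| := hfin (fun j => |a j|) (abs_nonneg _) (abs_nonneg _) i
  rw [Real.norm_eq_abs, Real.norm_eq_abs, abs_le]
  have hsq : 0 ≤ Real.sqrt ((n:ℝ)+1) := Real.sqrt_nonneg _
  have h1 : |(n:ℝ)| = n := abs_of_nonneg (by linarith)
  rw [h1]
  have hnn : (0:ℝ) ≤ n := by linarith
  have h2 : a i * n ≤ (|a 0|+|a 1|) * n :=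
    mul_le_mul_of_nonneg_right (le_trans (le_abs_self _) habs) hnn
  have h3 : -((|a 0|+|a 1|) * n) ≤ a i * n := by
    have h5 : -(|a 0|+|a 1|) ≤ a i := le_trans (by linarith [neg_abs_le (a i)] : -(|a 0|+|a 1|) ≤ -|a i|) (neg_abs_le (a i))
    nlinarith [mul_le_mul_of_nonneg_right h5 hnn]
  have h4 : D * ((n:ℝ) + 1 - Real.sqrt ((n:ℝ)+1)) ≤ D * (2*n) :=
    mul_le_mul_of_nonneg_left (by linarith) hD0.le
  have h6 : 0 ≤ D * (n:ℝ) := mul_nonneg hD0.le hnn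
  have hexp : (|a 0|+|a 1|+2*D)*(n:ℝ) = (|a 0|+|a 1|)*(n:ℝ) + 2*(D*(n:ℝ)) := by ring
  have hexp2 : D*(2*(n:ℝ)) = 2*(D*(n:ℝ)) := by ring
  constructor
  · linarith [hc.1]
  · linarith [hc.2]
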